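/- arXiv:2009.10883 — 2 statements merged into one kernel-verified Lean document; each statement's English description precedes it below -/
import Mathlib

section
/- Let M be a labeled MDP, M' its augmented MDP, and Paths_fin,φ ⊆ Paths_fin(s_init) a set of finite paths of M. For every policy π' ∈ Π' of M' (i.e., one under which every path eventually takes a_term) there exists a policy π ∈ Π of M, obtained by replacing every choice of a_term by an arbitrary enabled action of M, such that Pr(M^π ⊨ Paths_fin,φ) ≥ Pr(M'^{π'} ⊨ Paths_fin,φ). Consequently max_{π ∈ Π} Pr(M^π ⊨ Paths_fin,φ) ≥ max_{π' ∈ Π'} Pr(M'^{π'} ⊨ Paths_fin,φ). -/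
open scoped ENNReal

namespace LTLfMDP

/-- A labeled Markov decision process (data part): transition probabilities,
enabled actions, initial state and labeling function. -/
structure MDP (S A AP : Type) where
  P : S → A → S → ℝ≥0∞
  enabled : S → Set A
  init : S
  label : S → Set AP

/-- A finite path from the initial state: the list of action/successor-state
steps taken (the implicit first state is `init`). -/
abbrev FinPath (S A : Type) := List (A × S)

/-- An infinite path from the initial state: at time `i` the action taken and
the successor state reached (the implicit first state is `init`). -/
abbrev InfPath (S A : Type) := ℕ → A × S

/-- A policy maps every finite path to an action. -/
abbrev Policy (S A : Type) := FinPath S A → A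

variable {S A AP : Type}

/-- Well-formedness of a labeled MDP: every state has an enabled action and
the transition probabilities of enabled actions sum to one. -/
def MDP.IsWF [Fintype S] (M : MDP S A AP) : Prop :=
  (∀ s : S, (M.enabled s).Nonempty) ∧
    ∀ (s : S) (a : A), a ∈ M.enabled s → (∑ s' : S, M.P s a s') = 1

/-- The last state of a finite path (`init` for the empty path). -/
def MDP.lastState (M : MDP S A AP) (l : FinPath S A) : S :=
  (l.map Prod.snd).getLastD M.init

/-- The `i`-th state `s_i` along a finite path (`s_0 = init`). -/
def MDP.stateAtF (M : MDP S A AP) (l : FinPath S A) (i : ℕ) : S :=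
  M.lastState (l.take i)

/-- A finite path of the MDP: every action is enabled and every transition has
positive probability. -/
def MDP.ValidFin (M : MDP S A AP) (l : FinPath S A) : Prop :=
  ∀ i (h : i < l.length),
    (l.get ⟨i, h⟩).1 ∈ M.enabled (M.stateAtF l i) ∧
      0 < M.P (M.stateAtF l i) (l.get ⟨i, h⟩).1 (l.get ⟨i, h⟩).2

/-- The `i`-th state `s_i` along an infinite path (`s_0 = init`). -/
def MDP.stateAtI (M : MDP S A AP) (w : InfPath S A) : ℕ → S
  | 0 => M.init
  | i + 1 => (w i).2

/-- An infinite path of the MDP: every action is enabled and every transition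
has positive probability. -/
def MDP.ValidInf (M : MDP S A AP) (w : InfPath S A) : Prop :=
  ∀ i : ℕ,
    (w i).1 ∈ M.enabled (M.stateAtI w i) ∧
      0 < M.P (M.stateAtI w i) (w i).1 (M.stateAtI w (i + 1))

/-- A policy of the MDP chooses an enabled action after every finite path. -/
def MDP.IsPolicy (M : MDP S A AP) (π : Policy S A) : Prop :=
  ∀ l : FinPath S A, π l ∈ M.enabled (M.lastState l)

/-- The finite prefix of length `n` of an infinite path. -/
def takeI (w : InfPath S A) (n : ℕ) : FinPath S A :=
  (List.range n).map w

/-- A finite path is `π`-consistent if each of its actions is the one `π`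
assigns to the corresponding proper prefix. -/
def ConsistentFin (π : Policy S A) (l : FinPath S A) : Prop :=
  ∀ i (h : i < l.length), (l.get ⟨i, h⟩).1 = π (l.take i)

/-- `Paths^π(s_init)`: the set of `π`-consistent infinite paths of the MDP. -/
def MDP.PathsSet (M : MDP S A AP) (π : Policy S A) : Set (InfPath S A) :=
  { w | M.ValidInf w ∧ ∀ i : ℕ, (w i).1 = π (takeI w i) }

/-- The cylinder set of a finite path: all `π`-consistent infinite paths of the
MDP extending it. -/
def MDP.Cyl (M : MDP S A AP) (π : Policy S A) (l : FinPath S A) :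
    Set (InfPath S A) :=
  { w | w ∈ M.PathsSet π ∧ takeI w l.length = l }

/-- The σ-algebra generated by the cylinder sets of (valid, `π`-consistent)
finite paths. -/
def MDP.cylSigma (M : MDP S A AP) (π : Policy S A) :
    MeasurableSpace (InfPath S A) :=
  MeasurableSpace.generateFrom
    { C | ∃ l : FinPath S A, M.ValidFin l ∧ ConsistentFin π l ∧ C = M.Cyl π l }

/-- The product of the transition probabilities along a finite path starting
in a given state. -/
noncomputable def MDP.weightFrom (M : MDP S A AP) : S → List (A × S) → ℝ≥0∞
  | _, [] => 1
  | s, (a, s') :: rest => M.P s a s' * M.weightFrom s' rest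

/-- `∏_{0 ≤ i < n} P(s_i, a_i, s_{i+1})` for a finite path from `init`. -/
noncomputable def MDP.pathWeight (M : MDP S A AP) (l : FinPath S A) : ℝ≥0∞ :=
  M.weightFrom M.init l

/-- `μ` is the probability measure `Pr^π` induced by the policy `π`: it assigns
to the cylinder set of every valid `π`-consistent finite path the product of
the transition probabilities along that path. -/
def IsCylMeasure (M : MDP S A AP) (π : Policy S A)
    (μ : @MeasureTheory.Measure (InfPath S A) (M.cylSigma π)) : Prop :=
  ∀ l : FinPath S A, M.ValidFin l → ConsistentFin π l →
    μ (M.Cyl π l) = M.pathWeight l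

/-- `{w ∈ Paths^π(s_init) : pre(w) ∩ Paths_fin,φ ≠ ∅}`: the `π`-consistent
infinite paths having some finite prefix in the given set of finite paths. -/
def MDP.SatFinSet (M : MDP S A AP) (π : Policy S A)
    (Pfin : Set (FinPath S A)) : Set (InfPath S A) :=
  { w | w ∈ M.PathsSet π ∧ ∃ l ∈ Pfin, takeI w l.length = l }

/-- The augmented MDP `M'`: state `none` is `s_term`, action `none` is
`a_term`, and atomic proposition `none` is `alive`. -/
noncomputable def MDP.augment (M : MDP S A AP) : MDP (Option S) (Option A) (Option AP) where
  P s a s' :=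
    match s, a, s' with
    | some s0, some a0, some s1 => M.P s0 a0 s1
    | _, none, none => 1
    | _, _, _ => 0
  enabled s :=
    match s with
    | some s0 => insert none (Option.some '' M.enabled s0)
    | none => {none}
  init := some M.init
  label s :=
    match s with
    | some s0 => insert none (Option.some '' M.label s0)
    | none => ∅

/-- A finite path of `M` viewed as a finite path of the augmented MDP `M'`. -/
def liftFin (l : FinPath S A) : FinPath (Option S) (Option A) :=
  l.map fun p => (some p.1, some p.2)

/-- Membership in `Π'`: under `π'` every `π'`-consistent path of the augmented
MDP eventually takes the action `a_term` (= `none`). -/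
def MDP.Terminating (M' : MDP (Option S) (Option A) (Option AP))
    (π' : Policy (Option S) (Option A)) : Prop :=
  ∀ w ∈ M'.PathsSet π', ∃ i : ℕ, (w i).1 = (none : Option A)


section Helpers

variable {S A AP : Type}

lemma getLastD_map' {α β : Type*} (f : α → β) (xs : List α) (d : α) :
    (xs.map f).getLastD (f d) = f (xs.getLastD d) := by
  induction xs generalizing d with
  | nil => rfl
  | cons a t ih => rw [List.map_cons, List.getLastD_cons, List.getLastD_cons, ih]

lemma liftFin_length (l : FinPath S A) : (liftFin l).length = l.length := by
  simp [liftFin]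

lemma liftFin_take (l : FinPath S A) (i : ℕ) :
    (liftFin l).take i = liftFin (l.take i) := by
  simp [liftFin, List.map_take]

lemma lastState_liftFin (M : MDP S A AP) (l : FinPath S A) :
    (M.augment).lastState (liftFin l) = some (M.lastState l) := by
  unfold MDP.lastState liftFin
  have h1 : (l.map fun p => ((some p.1 : Option A), (some p.2 : Option S))).map Prod.snd
      = (l.map Prod.snd).map some := by
    simp [List.map_map]
  rw [h1]
  have h2 := getLastD_map' (fun s : S => (some s : Option S)) (l.map Prod.snd) M.init
  simpa [MDP.augment] using h2

lemma stateAtF_liftFin (M : MDP S A AP) (l : FinPath S A) (i : ℕ) :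
    (M.augment).stateAtF (liftFin l) i = some (M.stateAtF l i) := by
  unfold MDP.stateAtF
  rw [liftFin_take, lastState_liftFin]

lemma liftFin_get (l : FinPath S A) (i : ℕ) (h : i < (liftFin l).length) :
    (liftFin l).get ⟨i, h⟩
      = (some (l.get ⟨i, by simpa [liftFin_length] using h⟩).1,
         some (l.get ⟨i, by simpa [liftFin_length] using h⟩).2) := by
  simp [liftFin, List.getElem_map]

lemma takeI_length (w : InfPath S A) (n : ℕ) : (takeI w n).length = n := by
  simp [takeI]

lemma takeI_take (w : InfPath S A) {i n : ℕ} (h : i ≤ n) :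
    (takeI w n).take i = takeI w i := by
  simp [takeI, ← List.map_take, List.take_range, Nat.min_eq_left h]

lemma takeI_get (w : InfPath S A) (n i : ℕ) (h : i < (takeI w n).length) :
    (takeI w n).get ⟨i, h⟩ = w i := by
  simp [takeI, List.getElem_map, List.getElem_range]

lemma weightFrom_liftFin (M : MDP S A AP) :
    ∀ (l : FinPath S A) (s : S),
      (M.augment).weightFrom (some s) (liftFin l) = M.weightFrom s l
  | [], _ => rfl
  | (a, s') :: t, s => by
      show (M.augment).P (some s) (some a) (some s') *
          (M.augment).weightFrom (some s') (liftFin t) = _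
      rw [weightFrom_liftFin M t s']
      rfl

lemma pathWeight_liftFin (M : MDP S A AP) (l : FinPath S A) :
    (M.augment).pathWeight (liftFin l) = M.pathWeight l :=
  weightFrom_liftFin M l M.init

lemma validFin_liftFin (M : MDP S A AP) {l : FinPath S A} (hl : M.ValidFin l) :
    (M.augment).ValidFin (liftFin l) := by
  intro i h
  have h' : i < l.length := by simpa [liftFin_length] using h
  rw [liftFin_get l i h, stateAtF_liftFin]
  obtain ⟨he, hp⟩ := hl i h'
  constructor
  · exact Set.mem_insert_of_mem _ ⟨_, he, rfl⟩
  · exact hp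

end Helpers

/-- for every policy `π' ∈ Π'` of the augmented MDP `M'` there is
a policy `π` of `M`, obtained by replacing every choice of `a_term` by an
arbitrary enabled action of `M`, with at least the same probability of having a
prefix in `Paths_fin,φ`; consequently
`max_{π ∈ Π} Pr(M^π ⊨ Paths_fin,φ) ≥ max_{π' ∈ Π'} Pr(M'^{π'} ⊨ Paths_fin,φ)`. -/
theorem augment_policy_ge
    {S A AP : Type} [Fintype S] [Fintype A] [Fintype AP]
    (M : MDP S A AP) (hM : M.IsWF)
    (Pfin : Set (FinPath S A)) (hPfin : ∀ l ∈ Pfin, M.ValidFin l)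
    (μf : ∀ π : Policy S A,
      @MeasureTheory.Measure (InfPath S A) (M.cylSigma π))
    (hμf : ∀ π : Policy S A, M.IsPolicy π → IsCylMeasure M π (μf π))
    (μf' : ∀ π' : Policy (Option S) (Option A),
      @MeasureTheory.Measure (InfPath (Option S) (Option A))
        ((M.augment).cylSigma π'))
    (hμf' : ∀ π' : Policy (Option S) (Option A),
      (M.augment).IsPolicy π' → IsCylMeasure (M.augment) π' (μf' π')) :
    (∀ π' : Policy (Option S) (Option A),
        (M.augment).IsPolicy π' → (M.augment).Terminating π' →
          ∃ π : Policy S A, M.IsPolicy π ∧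
            (∀ (l : FinPath S A) (a : A), π' (liftFin l) = some a → π l = a) ∧
            μf π (M.SatFinSet π Pfin) ≥
              μf' π' ((M.augment).SatFinSet π' (liftFin '' Pfin))) ∧
      (⨆ (π : Policy S A) (_ : M.IsPolicy π), μf π (M.SatFinSet π Pfin)) ≥
        ⨆ (π' : Policy (Option S) (Option A))
          (_ : (M.augment).IsPolicy π' ∧ (M.augment).Terminating π'),
          μf' π' ((M.augment).SatFinSet π' (liftFin '' Pfin)) := by
  classical
  have key : ∀ π' : Policy (Option S) (Option A),
      (M.augment).IsPolicy π' →
        ∃ π : Policy S A, M.IsPolicy π ∧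
          (∀ (l : FinPath S A) (a : A), π' (liftFin l) = some a → π l = a) ∧
          μf π (M.SatFinSet π Pfin) ≥
            μf' π' ((M.augment).SatFinSet π' (liftFin '' Pfin)) := by
    intro π' hπ'
    set π : Policy S A :=
      fun l => (π' (liftFin l)).elim (hM.1 (M.lastState l)).some id with hπdef
    have hπspec : ∀ (l : FinPath S A) (a : A), π' (liftFin l) = some a → π l = a := by
      intro l a h
      simp [hπdef, h]
    have hpol : M.IsPolicy π := by
      intro l
      rcases h : π' (liftFin l) with _ | a
      · simpa [hπdef, h] using (hM.1 (M.lastState l)).some_mem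
      · have := hπ' (liftFin l)
        rw [h, lastState_liftFin] at this
        have ha : a ∈ M.enabled (M.lastState l) := by
          rcases this with h1 | ⟨b, hb, hb2⟩
          · exact absurd h1 (by simp)
          · cases hb2; exact hb
        rw [hπspec l a h]; exact ha
    refine ⟨π, hpol, hπspec, ?_⟩
    set G : Set (FinPath S A) := {l | l ∈ Pfin ∧ ConsistentFin π' (liftFin l)} with hG
    set G₀ : Set (FinPath S A) := {l | l ∈ G ∧ ∀ k < l.length, l.take k ∉ G} with hG₀
    have hcount : G₀.Countable := Set.to_countable _
    -- π-consistency of members of G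
    have hconsG : ∀ l ∈ G, ConsistentFin π l := by
      intro l hl i h
      have h' : i < (liftFin l).length := by simpa [liftFin_length] using h
      have hc := hl.2 i h'
      rw [liftFin_get l i h'] at hc
      rw [liftFin_take] at hc
      exact (hπspec (l.take i) _ hc.symm).symm
    -- Claim A : Sat' ⊆ union of cylinders over G₀
    have claimA : (M.augment).SatFinSet π' (liftFin '' Pfin) ⊆
        ⋃ l ∈ G₀, (M.augment).Cyl π' (liftFin l) := by
      rintro w' ⟨hw'paths, l', ⟨l, hlPfin, rfl⟩, htake⟩
      rw [liftFin_length] at htake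
      -- l ∈ G
      have hlG : l ∈ G := by
        refine ⟨hlPfin, ?_⟩
        intro i h
        have hlen : i < (takeI w' l.length).length := by
          rw [takeI_length]; exact lt_of_lt_of_le (by simpa [liftFin_length] using h) le_rfl
        have e1 : (liftFin l).get ⟨i, h⟩ = w' i := by
          rw [List.get_of_eq htake.symm ⟨i, h⟩]
          exact takeI_get w' l.length i _
        have e2 : (liftFin l).take i = takeI w' i := by
          have hi : i ≤ l.length := le_of_lt (by simpa [liftFin_length] using h)
          rw [← htake, takeI_take w' hi]
        rw [e1, e2]
        exact hw'paths.2 i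
      -- minimal prefix
      have hex : ∃ k, l.take k ∈ G := ⟨l.length, by simpa using hlG⟩
      set n := Nat.find hex with hn
      have hmG : l.take n ∈ G := Nat.find_spec hex
      have hnle : n ≤ l.length := Nat.find_le (by simpa using hlG)
      have hmlen : (l.take n).length = n := by simp [Nat.min_eq_left hnle]
      have hmG₀ : l.take n ∈ G₀ := by
        refine ⟨hmG, ?_⟩
        intro k hk
        rw [hmlen] at hk
        rw [List.take_take, Nat.min_eq_left hk.le]
        exact Nat.find_min hex hk
      refine Set.mem_biUnion hmG₀ ?_
      refine ⟨hw'paths, ?_⟩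
      rw [liftFin_length, hmlen, ← liftFin_take, ← htake, takeI_take w' hnle]
    -- Claim C : union of cylinders over G₀ ⊆ Sat
    have claimC : (⋃ l ∈ G₀, M.Cyl π l) ⊆ M.SatFinSet π Pfin := by
      rintro w hw
      rcases Set.mem_iUnion₂.1 hw with ⟨l, hl, hwl, htake⟩
      exact ⟨hwl, l, hl.1.1, htake⟩
    -- disjointness
    have haux : ∀ l₁ ∈ G₀, ∀ l₂ ∈ G₀, ∀ w : InfPath S A,
        w ∈ M.Cyl π l₁ → w ∈ M.Cyl π l₂ → l₁.length ≤ l₂.length → l₁ = l₂ := by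
      intro l₁ h₁ l₂ h₂ w hw₁ hw₂ hle
      have e : l₁ = l₂.take l₁.length := by
        have h1 := takeI_take w hle
        rw [hw₂.2, hw₁.2] at h1
        exact h1.symm
      rcases lt_or_eq_of_le hle with hlt | heq
      · exact absurd (e ▸ h₁.1) (h₂.2 l₁.length hlt)
      · rw [e, heq, List.take_length]
    have hdisj : G₀.PairwiseDisjoint (fun l => M.Cyl π l) := by
      intro l₁ h₁ l₂ h₂ hne
      rw [Function.onFun, Set.disjoint_left]
      intro w hw₁ hw₂
      rcases le_total l₁.length l₂.length with h | h
      · exact hne (haux l₁ h₁ l₂ h₂ w hw₁ hw₂ h)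
      · exact hne (haux l₂ h₂ l₁ h₁ w hw₂ hw₁ h).symm
    -- measurability of the M-cylinders
    have hmeas : ∀ l ∈ G₀, @MeasurableSet _ (M.cylSigma π) (M.Cyl π l) := by
      intro l hl
      exact MeasurableSpace.measurableSet_generateFrom
        ⟨l, hPfin l hl.1.1, hconsG l hl.1, rfl⟩
    -- the chain
    have step1 : μf' π' ((M.augment).SatFinSet π' (liftFin '' Pfin)) ≤
        μf' π' (⋃ l ∈ G₀, (M.augment).Cyl π' (liftFin l)) :=
      MeasureTheory.measure_mono claimA
    have step2 : μf' π' (⋃ l ∈ G₀, (M.augment).Cyl π' (liftFin l)) ≤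
        ∑' l : G₀, μf' π' ((M.augment).Cyl π' (liftFin l.1)) :=
      MeasureTheory.measure_biUnion_le _ hcount _
    have step3 : ∀ l : G₀, μf' π' ((M.augment).Cyl π' (liftFin l.1)) =
        μf π (M.Cyl π l.1) := by
      rintro ⟨l, hl⟩
      have hv : M.ValidFin l := hPfin l hl.1.1
      rw [hμf' π' hπ' (liftFin l) (validFin_liftFin M hv) hl.1.2,
        pathWeight_liftFin, hμf π hpol l hv (hconsG l hl.1)]
    have step4 : μf π (⋃ l ∈ G₀, M.Cyl π l) = ∑' l : G₀, μf π (M.Cyl π l.1) :=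
      MeasureTheory.measure_biUnion hcount hdisj hmeas
    calc μf' π' ((M.augment).SatFinSet π' (liftFin '' Pfin))
        ≤ ∑' l : G₀, μf' π' ((M.augment).Cyl π' (liftFin l.1)) := step1.trans step2
      _ = ∑' l : G₀, μf π (M.Cyl π l.1) := tsum_congr step3
      _ = μf π (⋃ l ∈ G₀, M.Cyl π l) := step4.symm
      _ ≤ μf π (M.SatFinSet π Pfin) := MeasureTheory.measure_mono claimC
  refine ⟨fun π' h1 _ => key π' h1, ?_⟩
  refine iSup_le fun π' => iSup_le fun hπ' => ?_
  obtain ⟨π, hp, -, hge⟩ := key π' hπ'.1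
  exact hge.trans (le_iSup_of_le π (le_iSup_of_le hp le_rfl))


end LTLfMDP
end

section
/- Let φ be an LTLf formula over atomic propositions AP, and let ρ = ρ_0…ρ_{n-1} ∈ (2^{AP})^* be a nonempty finite trace. Then ρ ⊨ φ under LTLf semantics if and only if the lift of ρ (the infinite trace whose i-th letter is ρ_i ∪ {alive} for i < n and ∅ for i ≥ n) satisfies the LTL formula g(φ) = t(φ) ∧ (alive U (G ¬alive)) under LTL semantics. -/
open scoped ENNReal

namespace LTLfMDP

/-- Syntax of LTL / LTLf formulas over atomic propositions `α`. -/
inductive LTL (α : Type) : Type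
  | tru : LTL α
  | atom : α → LTL α
  | neg : LTL α → LTL α
  | conj : LTL α → LTL α → LTL α
  | next : LTL α → LTL α
  | untl : LTL α → LTL α → LTL α

variable {α : Type}

/-- Infinite-trace (LTL) satisfaction `σ, i ⊨ φ`. -/
def LTL.SatI (σ : ℕ → Set α) : ℕ → LTL α → Prop
  | _, .tru => True
  | i, .atom p => p ∈ σ i
  | i, .neg φ => ¬ LTL.SatI σ i φ
  | i, .conj φ ψ => LTL.SatI σ i φ ∧ LTL.SatI σ i ψ
  | i, .next φ => LTL.SatI σ (i + 1) φ
  | i, .untl φ ψ =>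
      ∃ j : ℕ, i ≤ j ∧ LTL.SatI σ j ψ ∧ ∀ k : ℕ, i ≤ k → k < j → LTL.SatI σ k φ

/-- Infinite-trace (LTL) satisfaction `σ ⊨ φ`. -/
def LTL.Sat (σ : ℕ → Set α) (φ : LTL α) : Prop := LTL.SatI σ 0 φ

/-- `G φ` abbreviates `¬(⊤ U ¬φ)`. -/
def LTL.G (φ : LTL α) : LTL α := .neg (.untl .tru (.neg φ))

/-- Finite-trace (LTLf) satisfaction `ρ, i ⊨ φ` (positions outside the trace
carry the empty letter, which is never consulted from a position inside a
nonempty trace). -/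
def LTL.SatFI (ρ : List (Set α)) : ℕ → LTL α → Prop
  | _, .tru => True
  | i, .atom p => p ∈ ρ.getD i ∅
  | i, .neg φ => ¬ LTL.SatFI ρ i φ
  | i, .conj φ ψ => LTL.SatFI ρ i φ ∧ LTL.SatFI ρ i ψ
  | i, .next φ => i + 1 < ρ.length ∧ LTL.SatFI ρ (i + 1) φ
  | i, .untl φ ψ =>
      ∃ j : ℕ, i ≤ j ∧ j < ρ.length ∧ LTL.SatFI ρ j ψ ∧
        ∀ k : ℕ, i ≤ k → k < j → LTL.SatFI ρ k φ

/-- Finite-trace (LTLf) satisfaction `ρ ⊨ φ`. -/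
def LTL.SatF (ρ : List (Set α)) (φ : LTL α) : Prop := LTL.SatFI ρ 0 φ

/-- The translation `t` from LTLf formulas over `α` to LTL formulas over
`Option α`, where the fresh proposition `alive` is `none`. -/
def LTL.trans : LTL α → LTL (Option α)
  | .tru => .tru
  | .atom p => .conj (.atom (some p)) (.atom none)
  | .neg φ => .neg φ.trans
  | .conj φ ψ => .conj φ.trans ψ.trans
  | .next φ => .next (.conj (.atom none) φ.trans)
  | .untl φ ψ => .untl φ.trans (.conj (.atom none) ψ.trans)

/-- `g(φ) = t(φ) ∧ (alive U (G ¬alive))`. -/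
def LTL.gtrans (φ : LTL α) : LTL (Option α) :=
  .conj φ.trans (.untl (.atom none) (LTL.G (.neg (.atom none))))

/-- The lift of a finite trace over `2^AP` to an infinite trace over
`2^(AP ∪ {alive})`: the `i`-th letter is `ρ_i ∪ {alive}` for `i < |ρ|`
and `∅` afterwards. -/
def liftTrace (ρ : List (Set α)) : ℕ → Set (Option α) := fun i =>
  if i < ρ.length then insert none (Option.some '' ρ.getD i ∅) else ∅

lemma none_mem_liftTrace (ρ : List (Set α)) (i : ℕ) :
    (none ∈ liftTrace ρ i) ↔ i < ρ.length := by
  unfold liftTrace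
  split <;> simp_all

lemma some_mem_liftTrace (ρ : List (Set α)) (i : ℕ) (p : α) :
    (some p ∈ liftTrace ρ i) ↔ i < ρ.length ∧ p ∈ ρ.getD i ∅ := by
  unfold liftTrace
  split <;> simp_all

lemma satFI_iff_satI_trans (ρ : List (Set α)) (φ : LTL α) :
    ∀ i, i < ρ.length → (LTL.SatFI ρ i φ ↔ LTL.SatI (liftTrace ρ) i φ.trans) := by
  induction φ with
  | tru => intro i hi; simp [LTL.SatFI, LTL.SatI, LTL.trans]
  | atom p =>
      intro i hi
      simp [LTL.SatFI, LTL.SatI, LTL.trans, some_mem_liftTrace, none_mem_liftTrace, hi]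
  | neg φ ih =>
      intro i hi
      simp [LTL.SatFI, LTL.SatI, LTL.trans, ih i hi]
  | conj φ ψ ih1 ih2 =>
      intro i hi
      simp [LTL.SatFI, LTL.SatI, LTL.trans, ih1 i hi, ih2 i hi]
  | next φ ih =>
      intro i hi
      show (i + 1 < ρ.length ∧ _) ↔ (_ ∧ _)
      simp only [LTL.SatI, none_mem_liftTrace]
      constructor
      · rintro ⟨h1, h2⟩; exact ⟨h1, (ih _ h1).1 h2⟩
      · rintro ⟨h1, h2⟩; exact ⟨h1, (ih _ h1).2 h2⟩
  | untl φ ψ ih1 ih2 =>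
      intro i hi
      constructor
      · rintro ⟨j, hij, hj, hψ, hφ⟩
        exact ⟨j, hij, ⟨(none_mem_liftTrace ρ j).2 hj, (ih2 j hj).1 hψ⟩,
          fun k hik hkj => (ih1 k (lt_trans hkj hj)).1 (hφ k hik hkj)⟩
      · rintro ⟨j, hij, ⟨hn, hψ⟩, hφ⟩
        have hj : j < ρ.length := (none_mem_liftTrace ρ j).1 hn
        exact ⟨j, hij, hj, (ih2 j hj).2 hψ,
          fun k hik hkj => (ih1 k (lt_trans hkj hj)).2 (hφ k hik hkj)⟩

/-- a nonempty finite trace `ρ` satisfies the LTLf formula `φ`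
iff the lift of `ρ` (letters `ρ_i ∪ {alive}` for `i < |ρ|` and `∅` afterwards)
satisfies the LTL formula `g(φ) = t(φ) ∧ (alive U (G ¬alive))`. -/
theorem ltlf_sat_iff_lift_sat_gtrans
    (AP : Type) (φ : LTL AP) (ρ : List (Set AP)) (hρ : ρ ≠ []) :
    LTL.SatF ρ φ ↔ LTL.Sat (liftTrace ρ) (LTL.gtrans φ) := by
  have h0 : 0 < ρ.length := List.length_pos_iff.2 hρ
  have htail : LTL.SatI (liftTrace ρ) 0
      (LTL.untl (.atom none) (LTL.G (.neg (.atom none)))) := by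
    refine ⟨ρ.length, Nat.zero_le _, ?_, fun k _ hk => (none_mem_liftTrace ρ k).2 hk⟩
    show ¬ ∃ m, _ ∧ _ ∧ _
    rintro ⟨m, hm, hmem, -⟩
    have : m < ρ.length := (none_mem_liftTrace ρ m).1 (not_not.mp hmem)
    omega
  constructor
  · intro h
    exact ⟨(satFI_iff_satI_trans ρ φ 0 h0).1 h, htail⟩
  · rintro ⟨h, -⟩
    exact (satFI_iff_satI_trans ρ φ 0 h0).2 h

end LTLfMDP
end
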